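/- arXiv:2404.13717 — 2 statements merged into one kernel-verified Lean document; each statement's English description precedes it below -/
import Mathlib

section
/- H is a first integral of the system: if γ : I → ℝ⁴ is differentiable on an interval I and satisfies γ'(t) = X_{η₃}(γ(t)) for all t ∈ I, then the function t ↦ H(γ(t)) is constant on I; equivalently, the derivative of H in the direction X_{η₃}(x) vanishes at every x ∈ ℝ⁴. -/
/-- The vector field of the system x₁' = x₂, x₂' = x₃, x₃' = x₄,
    x₄' = −x₁ + η₃x₃ + x₁². -/
def Xfield (η₃ : ℝ) (x : Fin 4 → ℝ) : Fin 4 → ℝ :=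
  ![x 1, x 2, x 3, -x 0 + η₃ * x 2 + (x 0) ^ 2]

/-- The first integral H(x₁,x₂,x₃,x₄)
    = (1/2)x₁² − (1/3)x₁³ − (η₃/2)x₂² + x₂x₄ − (1/2)x₃². -/
noncomputable def Hfun (η₃ : ℝ) (x : Fin 4 → ℝ) : ℝ :=
  (1 / 2) * (x 0) ^ 2 - (1 / 3) * (x 0) ^ 3 - (η₃ / 2) * (x 1) ^ 2
    + x 1 * x 3 - (1 / 2) * (x 2) ^ 2

/-- The total derivative of `Hfun`. -/
noncomputable def HDeriv (η₃ : ℝ) (x : Fin 4 → ℝ) : (Fin 4 → ℝ) →L[ℝ] ℝ :=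
  (x 0 - (x 0) ^ 2) • ContinuousLinearMap.proj 0
    + (x 3 - η₃ * x 1) • ContinuousLinearMap.proj 1
    + (-(x 2)) • ContinuousLinearMap.proj 2
    + (x 1) • ContinuousLinearMap.proj 3

lemma hasFDerivAt_Hfun (η₃ : ℝ) (x : Fin 4 → ℝ) :
    HasFDerivAt (Hfun η₃) (HDeriv η₃ x) x := by
  have h0 : HasFDerivAt (fun f : Fin 4 → ℝ => f 0) (ContinuousLinearMap.proj (R := ℝ) (φ := fun _ : Fin 4 => ℝ) 0) x :=
    hasFDerivAt_apply 0 x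
  have h1 : HasFDerivAt (fun f : Fin 4 → ℝ => f 1) (ContinuousLinearMap.proj (R := ℝ) (φ := fun _ : Fin 4 => ℝ) 1) x :=
    hasFDerivAt_apply 1 x
  have h2 : HasFDerivAt (fun f : Fin 4 → ℝ => f 2) (ContinuousLinearMap.proj (R := ℝ) (φ := fun _ : Fin 4 => ℝ) 2) x :=
    hasFDerivAt_apply 2 x
  have h3 : HasFDerivAt (fun f : Fin 4 → ℝ => f 3) (ContinuousLinearMap.proj (R := ℝ) (φ := fun _ : Fin 4 => ℝ) 3) x :=
    hasFDerivAt_apply 3 x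
  have h := ((((((h0.mul h0)).const_mul (1/2 : ℝ)).sub
      (((h0.mul h0).mul h0).const_mul (1/3 : ℝ))).sub
      ((h1.mul h1).const_mul (η₃/2))).add (h1.mul h3)).sub
      ((h2.mul h2).const_mul (1/2 : ℝ))
  have heq : Hfun η₃ = fun f : Fin 4 → ℝ =>
      1/2 * (f 0 * f 0) - 1/3 * (f 0 * f 0 * f 0) - η₃/2 * (f 1 * f 1)
        + f 1 * f 3 - 1/2 * (f 2 * f 2) := by
    funext f; simp [Hfun]; ring
  rw [heq]
  refine h.congr_fderiv ?_
  ext v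
  simp [HDeriv, ContinuousLinearMap.proj_apply]
  ring

lemma HDeriv_Xfield (η₃ : ℝ) (x : Fin 4 → ℝ) :
    HDeriv η₃ x (Xfield η₃ x) = 0 := by
  simp [HDeriv, Xfield, ContinuousLinearMap.proj_apply]
  ring

/-- H is a first integral of the system: along any solution defined on an
    interval, t ↦ H(γ(t)) is constant; equivalently, the derivative of H in
    the direction X_{η₃}(x) vanishes at every x ∈ ℝ⁴. -/
theorem stmt_2 (η₃ : ℝ) :
    (∀ (γ : ℝ → Fin 4 → ℝ) (I : Set ℝ), I.OrdConnected →
      (∀ t ∈ I, HasDerivAt γ (Xfield η₃ (γ t)) t) →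
      ∀ s ∈ I, ∀ t ∈ I, Hfun η₃ (γ s) = Hfun η₃ (γ t)) ∧
    (∀ x : Fin 4 → ℝ, fderiv ℝ (Hfun η₃) x (Xfield η₃ x) = 0) := by
  constructor
  · intro γ I hI hγ
    have key : ∀ t ∈ I, HasDerivAt (fun t => Hfun η₃ (γ t)) 0 t := by
      intro t ht
      have h := (hasFDerivAt_Hfun η₃ (γ t)).comp_hasDerivAt t (hγ t ht)
      rwa [HDeriv_Xfield] at h
    have main : ∀ a ∈ I, ∀ b ∈ I, a ≤ b → Hfun η₃ (γ a) = Hfun η₃ (γ b) := by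
      intro a ha b hb hab
      rcases eq_or_lt_of_le hab with rfl | hlt
      · rfl
      have hsub : Set.Icc a b ⊆ I := hI.out ha hb
      have hdiff : DifferentiableOn ℝ (fun t => Hfun η₃ (γ t)) (Set.Icc a b) :=
        fun t ht => ((key t (hsub ht)).differentiableAt).differentiableWithinAt
      refine (convex_Icc a b).is_const_of_fderivWithin_eq_zero hdiff ?_
        (Set.left_mem_Icc.2 hab) (Set.right_mem_Icc.2 hab)
      intro t ht
      have hu : UniqueDiffWithinAt ℝ (Set.Icc a b) t := (uniqueDiffOn_Icc hlt) t ht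
      have h0 : HasFDerivWithinAt (fun t => Hfun η₃ (γ t)) (0 : ℝ →L[ℝ] ℝ) (Set.Icc a b) t := by
        have h1 : HasDerivWithinAt (fun t => Hfun η₃ (γ t)) 0 (Set.Icc a b) t :=
          (key t (hsub ht)).hasDerivWithinAt
        have h2 := h1.hasFDerivWithinAt
        refine h2.congr_fderiv ?_
        ext
        simp
      exact h0.fderivWithin hu
    intro s hs t ht
    rcases le_total s t with h | h
    · exact main s hs t ht h
    · exact (main t ht s hs h).symm
  · intro x
    rw [(hasFDerivAt_Hfun η₃ x).fderiv]
    exact HDeriv_Xfield η₃ x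
end

section
/- (Bifocus case) If −2 < η₃ < 2, then, with ρ = √(η₃+2)/2 and ω = √(2−η₃)/2, the spectrum of the matrix A regarded as a complex matrix is exactly the set {ρ + ωi, ρ − ωi, −ρ + ωi, −ρ − ωi}; in particular A has two pairs of complex-conjugate eigenvalues with nonzero real parts of opposite signs. -/
/-- The linearization at the origin of the vector field
    X_{η₃}(x₁,x₂,x₃,x₄) = (x₂,x₃,x₄,−x₁+η₃x₃+x₁²). -/
def Amat (η₃ : ℝ) : Matrix (Fin 4) (Fin 4) ℝ :=
  !![0, 1, 0, 0;
     0, 0, 1, 0;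
     0, 0, 0, 1;
     -1, 0, η₃, 0]

lemma spectrum_Amat_iff (η₃ : ℝ) (μ : ℂ) :
    μ ∈ spectrum ℂ ((Amat η₃).map (fun r => (r : ℂ))) ↔
      μ^4 - η₃ * μ^2 + 1 = 0 := by
  rw [spectrum.mem_iff, Matrix.isUnit_iff_isUnit_det, isUnit_iff_ne_zero, not_not]
  have : (algebraMap ℂ (Matrix (Fin 4) (Fin 4) ℂ)) μ - (Amat η₃).map (fun r => (r : ℂ)) =
      !![μ, -1, 0, 0; 0, μ, -1, 0; 0, 0, μ, -1; 1, 0, -η₃, μ] := by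
    ext i j
    fin_cases i <;> fin_cases j <;>
      simp [Amat, Matrix.algebraMap_matrix_apply, Matrix.one_apply, Matrix.vecHead,
        Matrix.vecTail]
  rw [this]
  have hdet : (!![μ, -1, 0, 0; 0, μ, -1, 0; 0, 0, μ, -1; 1, 0, -(η₃:ℂ), μ]).det =
      μ^4 - η₃ * μ^2 + 1 := by
    rw [show (!![μ, -1, 0, 0; 0, μ, -1, 0; 0, 0, μ, -1; 1, 0, -(η₃:ℂ), μ]) =
      Matrix.of ![![μ, -1, 0, 0], ![0, μ, -1, 0], ![0, 0, μ, -1], ![1, 0, -(η₃:ℂ), μ]] from rfl]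
    rw [Matrix.det_succ_row_zero]
    simp [Fin.sum_univ_succ, Matrix.det_fin_three, Matrix.submatrix, Fin.succAbove]
    ring
  rw [hdet]

/-- (Bifocus case) If −2 < η₃ < 2 then, with ρ = √(η₃+2)/2 and ω = √(2−η₃)/2
    (both positive), the spectrum of A regarded as a complex matrix is exactly
    {ρ + ωi, ρ − ωi, −ρ + ωi, −ρ − ωi}: two pairs of complex-conjugate
    eigenvalues with nonzero real parts of opposite signs. -/
theorem stmt_6 (η₃ : ℝ) (h₁ : -2 < η₃) (h₂ : η₃ < 2) :
    0 < Real.sqrt (η₃ + 2) / 2 ∧ 0 < Real.sqrt (2 - η₃) / 2 ∧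
    spectrum ℂ ((Amat η₃).map (fun r => (r : ℂ))) =
      {(Real.sqrt (η₃ + 2) / 2 : ℝ) + (Real.sqrt (2 - η₃) / 2 : ℝ) * Complex.I,
       (Real.sqrt (η₃ + 2) / 2 : ℝ) - (Real.sqrt (2 - η₃) / 2 : ℝ) * Complex.I,
       -(Real.sqrt (η₃ + 2) / 2 : ℝ) + (Real.sqrt (2 - η₃) / 2 : ℝ) * Complex.I,
       -(Real.sqrt (η₃ + 2) / 2 : ℝ) - (Real.sqrt (2 - η₃) / 2 : ℝ) * Complex.I} := by
  set ρ : ℝ := Real.sqrt (η₃ + 2) / 2 with hρdef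
  set ω : ℝ := Real.sqrt (2 - η₃) / 2 with hωdef
  have hρpos : 0 < ρ := by
    apply div_pos (Real.sqrt_pos.mpr (by linarith)) (by norm_num)
  have hωpos : 0 < ω := by
    apply div_pos (Real.sqrt_pos.mpr (by linarith)) (by norm_num)
  refine ⟨hρpos, hωpos, ?_⟩
  have hρ2 : (ρ : ℂ)^2 = (η₃ + 2) / 4 := by
    rw [hρdef]
    push_cast
    rw [div_pow, ← Complex.ofReal_pow, Real.sq_sqrt (by linarith : (0:ℝ) ≤ η₃ + 2)]
    push_cast; ring
  have hb2 : ((ω : ℂ) * Complex.I)^2 = ((η₃ : ℂ) - 2) / 4 := by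
    rw [mul_pow, Complex.I_sq, hωdef]
    push_cast
    rw [div_pow, ← Complex.ofReal_pow, Real.sq_sqrt (by linarith : (0:ℝ) ≤ 2 - η₃)]
    push_cast; ring
  ext μ
  rw [spectrum_Amat_iff]
  have key : μ^4 - η₃ * μ^2 + 1 =
      (μ - ((ρ:ℂ) + (ω:ℂ) * Complex.I)) * (μ - ((ρ:ℂ) - (ω:ℂ) * Complex.I)) *
      (μ - (-(ρ:ℂ) + (ω:ℂ) * Complex.I)) * (μ - (-(ρ:ℂ) - (ω:ℂ) * Complex.I)) := by
    linear_combination (2*μ^2 - (ρ:ℂ)^2 + ((ω:ℂ)*Complex.I)^2 - 1) * hρ2 +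
      (2*μ^2 + (ρ:ℂ)^2 - ((ω:ℂ)*Complex.I)^2 + 1) * hb2
  rw [key]
  simp only [Set.mem_insert_iff, Set.mem_singleton_iff, mul_eq_zero, sub_eq_zero]
  tauto
end
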